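/- For 0 < r < 1 and k, n ≥ 1, A(ℓ,n,k)/n! equals the n-th Taylor coefficient at 0 of the function z ↦ (1/k!)(Σ_{ν≥1} (B(ℓ,ν)/ν) z^ν)^k; i.e., A(ℓ,n,k)/n! = [z^n] (1/k!) L(z)^k where L(z) = Σ_{ν≥1} (B(ℓ,ν)/ν) z^ν. -/

import Mathlib

/-- A(ℓ,n,k): the number of ℓ-tuples of pairwise commuting permutations of
{1,...,n} whose generated subgroup has exactly k orbits. -/
noncomputable def A (ℓ n k : ℕ) : ℕ :=
  Nat.card {π : Fin ℓ → Equiv.Perm (Fin n) //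
    (∀ i j : Fin ℓ, π i * π j = π j * π i) ∧
    Nat.card (MulAction.orbitRel.Quotient
      (Subgroup.closure (Set.range π)) (Fin n)) = k}

/-- L(z) = Σ_{ν ≥ 1} (B(ℓ,ν)/ν) z^ν = Σ_{ν ≥ 1} (A(ℓ,ν,1)/ν!) z^ν,
as a formal power series over ℚ. -/
noncomputable def L (ℓ : ℕ) : PowerSeries ℚ :=
  PowerSeries.mk fun ν => if ν = 0 then 0 else (A ℓ ν 1 : ℚ) / (ν.factorial : ℚ)


open Equiv MulAction Subgroup

section Aux

variable {ℓ : ℕ} {α β : Type} 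

/-- commuting tuples with k orbits, for a general type. -/
def CT (ℓ : ℕ) (α : Type) (k : ℕ) : Type :=
  {π : Fin ℓ → Equiv.Perm α //
    (∀ i j : Fin ℓ, π i * π j = π j * π i) ∧
    Nat.card (MulAction.orbitRel.Quotient
      (Subgroup.closure (Set.range π)) α) = k}

/-- The orbit quotient. -/
abbrev QT (π : Fin ℓ → Equiv.Perm α) :=
  MulAction.orbitRel.Quotient (Subgroup.closure (Set.range π)) α

def PRel (π : Fin ℓ → Equiv.Perm α) (x y : α) : Prop :=
  ∃ g ∈ Subgroup.closure (Set.range π), g y = x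

lemma orbitRel_iff_Rel (π : Fin ℓ → Equiv.Perm α) (x y : α) :
    (MulAction.orbitRel (Subgroup.closure (Set.range π)) α) x y ↔ PRel π x y := by
  rw [MulAction.orbitRel_apply, MulAction.mem_orbit_iff]
  constructor
  · rintro ⟨⟨g, hg⟩, h⟩
    exact ⟨g, hg, h⟩
  · rintro ⟨g, hg, h⟩
    exact ⟨⟨g, hg⟩, h⟩

lemma rel_mk {π : Fin ℓ → Equiv.Perm α} {x y : α} (h : PRel π x y) :
    (Quotient.mk'' x : QT π) = Quotient.mk'' y :=
  Quotient.sound' ((orbitRel_iff_Rel π x y).mpr h)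

lemma rel_of_mk {π : Fin ℓ → Equiv.Perm α} {x y : α}
    (h : (Quotient.mk'' x : QT π) = Quotient.mk'' y) : PRel π x y :=
  (orbitRel_iff_Rel π x y).mp (Quotient.exact' h)

/-- simulation lemma: if `u` intertwines `σ` with `π`, reachability transfers. -/
lemma sim {π : Fin ℓ → Equiv.Perm α} {σ : Fin ℓ → Equiv.Perm β} {u : β → α}
    (hu : ∀ j x, u (σ j x) = π j (u x)) {h : Equiv.Perm β}
    (hh : h ∈ Subgroup.closure (Set.range σ)) :
    ∀ x y : β, h x = y → ∃ g ∈ Subgroup.closure (Set.range π), g (u x) = u y := by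
  induction hh using Subgroup.closure_induction with
  | mem s hs =>
    obtain ⟨j, rfl⟩ := hs
    exact fun x y hxy => ⟨π j, Subgroup.subset_closure ⟨j, rfl⟩, by rw [← hu]; rw [hxy]⟩
  | one => exact fun x y hxy => ⟨1, Subgroup.one_mem _, by simp at hxy ⊢; rw [hxy]⟩
  | mul a b ha hb iha ihb =>
    intro x y hxy
    obtain ⟨g₂, hg₂, hg₂e⟩ := ihb x (b x) rfl
    obtain ⟨g₁, hg₁, hg₁e⟩ := iha (b x) y (by simpa using hxy)
    exact ⟨g₁ * g₂, Subgroup.mul_mem _ hg₁ hg₂, by simp [Equiv.Perm.mul_apply, hg₂e, hg₁e]⟩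
  | inv a ha iha =>
    intro x y hxy
    obtain ⟨g, hg, hge⟩ := iha y x (by simp [← hxy])
    exact ⟨g⁻¹, Subgroup.inv_mem _ hg, by
      rw [← hge]; simp⟩

/-- elements of the closure preserve any function preserved by the generators. -/
lemma fixf {κ : Type*} {π : Fin ℓ → Equiv.Perm α} {f : α → κ}
    (hf : ∀ j x, f (π j x) = f x) {g : Equiv.Perm α}
    (hg : g ∈ Subgroup.closure (Set.range π)) : ∀ x, f (g x) = f x := by
  induction hg using Subgroup.closure_induction with
  | mem s hs => obtain ⟨j, rfl⟩ := hs; exact hf j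
  | one => simp
  | mul a b _ _ iha ihb => intro x; simp [Equiv.Perm.mul_apply, iha, ihb]
  | inv a _ iha => intro x; have := iha (a⁻¹ x); simpa using this.symm

/-- restriction simulation: reachability in `π` restricts to a fiber. -/
lemma sim2 {k : ℕ} {π : Fin ℓ → Equiv.Perm α} {f : α → Fin k}
    (hf : ∀ j x, f (π j x) = f x) {i : Fin k} {g : Equiv.Perm α}
    (hg : g ∈ Subgroup.closure (Set.range π)) :
    ∀ (x y : {x // f x = i}), g (x : α) = (y : α) →
      ∃ h ∈ Subgroup.closure
        (Set.range fun j => (π j).subtypePerm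
          (fun x => (by rw [hf j x] : f (π j x) = i ↔ f x = i))),
        h x = y := by
  induction hg using Subgroup.closure_induction with
  | mem s hs =>
    obtain ⟨j, rfl⟩ := hs
    intro x y hxy
    refine ⟨_, Subgroup.subset_closure ⟨j, rfl⟩, ?_⟩
    exact Subtype.ext (by simpa [Equiv.Perm.subtypePerm_apply] using hxy)
  | one =>
    intro x y hxy
    exact ⟨1, Subgroup.one_mem _, Subtype.ext (by simpa using hxy)⟩
  | mul a b ha hb iha ihb =>
    intro x y hxy
    have hbx : f (b (x : α)) = i := by rw [fixf hf hb, x.2]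
    obtain ⟨h₂, hh₂, hh₂e⟩ := ihb x ⟨b (x : α), hbx⟩ rfl
    obtain ⟨h₁, hh₁, hh₁e⟩ := iha ⟨b (x : α), hbx⟩ y (by simpa using hxy)
    exact ⟨h₁ * h₂, Subgroup.mul_mem _ hh₁ hh₂, by
      simp [Equiv.Perm.mul_apply, hh₂e, hh₁e]⟩
  | inv a ha iha =>
    intro x y hxy
    obtain ⟨h, hh, hhe⟩ := iha y x (by simp [← hxy])
    exact ⟨h⁻¹, Subgroup.inv_mem _ hh, by rw [← hhe]; simp⟩

end Aux
section Glue

variable {ℓ k : ℕ} {α : Type}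

/-- glue a family of permutations of the fibers of `f` into a permutation of `α`. -/
def glue (f : α → Fin k) (σ : ∀ i : Fin k, Fin ℓ → Equiv.Perm {x // f x = i})
    (j : Fin ℓ) : Equiv.Perm α :=
  (Equiv.sigmaFiberEquiv f).symm.trans
    ((Equiv.sigmaCongrRight fun i => σ i j).trans (Equiv.sigmaFiberEquiv f))

lemma glue_apply (f : α → Fin k) (σ : ∀ i : Fin k, Fin ℓ → Equiv.Perm {x // f x = i})
    (j : Fin ℓ) (x : α) : glue f σ j x = ((σ (f x) j) ⟨x, rfl⟩ : {y // f y = f x}) :=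
  rfl

lemma glue_coe (f : α → Fin k) (σ : ∀ i : Fin k, Fin ℓ → Equiv.Perm {x // f x = i})
    (j : Fin ℓ) {i : Fin k} (y : {x // f x = i}) :
    glue f σ j (y : α) = ((σ i j) y : α) := by
  obtain ⟨x, hx⟩ := y
  subst hx
  rfl

lemma glue_fix (f : α → Fin k) (σ : ∀ i : Fin k, Fin ℓ → Equiv.Perm {x // f x = i})
    (j : Fin ℓ) (x : α) : f (glue f σ j x) = f x := by
  rw [glue_apply]
  exact ((σ (f x) j) ⟨x, rfl⟩).2

end Glue

section MainEquiv

variable (ℓ k : ℕ) (α : Type)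

/-- commuting tuples together with an orbit labelling. -/
def XT : Type :=
  {p : (Fin ℓ → Equiv.Perm α) × (α → Fin k) //
    (∀ i j : Fin ℓ, p.1 i * p.1 j = p.1 j * p.1 i) ∧
    (∀ x y : α, p.2 x = p.2 y ↔ PRel p.1 x y) ∧
    Function.Surjective p.2}

/-- labelled fibers each carrying a transitive commuting tuple. -/
def YT : Type := Σ f : α → Fin k, ∀ i : Fin k, CT ℓ {x // f x = i} 1

variable {ℓ k α}

lemma xt_fix (p : XT ℓ k α) : ∀ (j : Fin ℓ) (x : α), p.1.2 (p.1.1 j x) = p.1.2 x :=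
  fun j x => (p.2.2.1 _ _).mpr ⟨p.1.1 j, Subgroup.subset_closure ⟨j, rfl⟩, rfl⟩

/-- THE key bijection. -/
noncomputable def mainEquiv : XT ℓ k α ≃ YT ℓ k α where
  toFun p :=
    ⟨p.1.2, fun i =>
      ⟨fun j => (p.1.1 j).subtypePerm
          (fun x => (by rw [xt_fix p j x] : p.1.2 (p.1.1 j x) = i ↔ p.1.2 x = i)),
        by
        constructor
        · intro a b
          ext x
          simpa [Equiv.Perm.mul_apply, Equiv.Perm.subtypePerm_apply, -Equiv.Perm.subtypePerm_mul] using
            (Equiv.ext_iff.mp (p.2.1 a b) (x : α))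
        · rw [Nat.card_eq_one_iff_unique]
          obtain ⟨x₀, hx₀⟩ := p.2.2.2 i
          constructor
          · constructor
            intro q q'
            induction q using Quotient.inductionOn' with
            | h x =>
            induction q' using Quotient.inductionOn' with
            | h y =>
              have hv : p.1.2 (y : α) = p.1.2 (x : α) := by rw [x.2, y.2]
              obtain ⟨g, hg, hge⟩ := (p.2.2.1 _ _).mp hv
              obtain ⟨h, hh, hhe⟩ := sim2 (xt_fix p) hg x y hge
              exact (rel_mk ⟨h, hh, hhe⟩).symm
          · exact ⟨Quotient.mk'' ⟨x₀, hx₀⟩⟩⟩⟩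
  invFun q :=
    ⟨(glue q.1 (fun i => (q.2 i).1), q.1),
      by
      refine ⟨?_, ?_, ?_⟩
      · -- commuting
        intro a b
        ext x
        have h1 : ∀ (c d : Fin ℓ),
            glue q.1 (fun i => (q.2 i).1) c (glue q.1 (fun i => (q.2 i).1) d x)
              = (((q.2 (q.1 x)).1 c) (((q.2 (q.1 x)).1 d) ⟨x, rfl⟩) : α) := by
          intro c d
          rw [glue_apply _ _ d x, glue_coe]
        rw [Equiv.Perm.mul_apply, Equiv.Perm.mul_apply, h1, h1]
        have := Equiv.ext_iff.mp ((q.2 (q.1 x)).2.1 a b) ⟨x, rfl⟩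
        rw [Equiv.Perm.mul_apply, Equiv.Perm.mul_apply] at this
        rw [this]
      · -- fibers are orbits
        intro x y
        constructor
        · intro hxy
          have hsub : Subsingleton (QT (fun j => (q.2 (q.1 y)).1 j)) := by
            have h1 := (q.2 (q.1 y)).2.2
            rw [Nat.card_eq_one_iff_unique] at h1
            exact h1.1
          have hq : (Quotient.mk'' (⟨y, rfl⟩ : {z // q.1 z = q.1 y}) :
              QT (fun j => (q.2 (q.1 y)).1 j)) = Quotient.mk'' ⟨x, hxy⟩ :=
            Subsingleton.elim _ _
          obtain ⟨h, hh, hhe⟩ := rel_of_mk hq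
          -- h ⟨x, hxy⟩ = ⟨y, rfl⟩, i.e. starting from x we reach y
          obtain ⟨g, hg, hge⟩ := sim (fun j z => (glue_coe q.1 (fun i => (q.2 i).1) j z).symm)
            hh ⟨x, hxy⟩ ⟨y, rfl⟩ hhe
          refine ⟨g⁻¹, Subgroup.inv_mem _ hg, ?_⟩
          have hxy2 : g x = y := hge
          rw [← hxy2]; simp
        · rintro ⟨g, hg, rfl⟩
          exact fixf (glue_fix q.1 (fun i => (q.2 i).1)) hg y
      · -- surjective
        intro i
        have h1 := (q.2 i).2.2
        rw [Nat.card_eq_one_iff_unique] at h1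
        obtain ⟨qq⟩ := h1.2
        obtain ⟨⟨x, hx⟩, -⟩ := Quotient.exists_rep qq
        exact ⟨x, hx⟩⟩
  left_inv p := by
    apply Subtype.ext
    apply Prod.ext
    · funext j
      ext x
      rw [glue_apply]
      rfl
    · rfl
  right_inv q := by
    obtain ⟨f, τ⟩ := q
    show (⟨f, _⟩ : YT ℓ k α) = ⟨f, τ⟩
    congr 1
    funext i
    apply Subtype.ext
    funext j
    ext y
    exact glue_coe f (fun i => (τ i).1) j y

end MainEquiv
section Counting

open scoped Classical

variable {ℓ k : ℕ} {α β γ : Type}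

lemma A_eq_card (ℓ n m : ℕ) : A ℓ n m = Nat.card (CT ℓ (Fin n) m) := rfl

lemma natCard_sigma {ι : Type} [Fintype ι] (F : ι → Type*) [∀ i, Finite (F i)] :
    Nat.card (Σ i, F i) = ∑ i, Nat.card (F i) := by
  letI : ∀ i, Fintype (F i) := fun i => Fintype.ofFinite _
  simp [Nat.card_eq_fintype_card]

/-- number of equivs between two fintypes. -/
lemma natCard_equiv [Fintype β] [Fintype γ] :
    Nat.card (β ≃ γ) =
      if Fintype.card β = Fintype.card γ then (Fintype.card β).factorial else 0 := by
  split_ifs with h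
  · obtain ⟨e⟩ := Fintype.card_eq.mp h
    rw [Nat.card_eq_fintype_card, Fintype.card_equiv e]
  · have : IsEmpty (β ≃ γ) := ⟨fun e => h (Fintype.card_congr e)⟩
    simp [Nat.card_of_isEmpty]

lemma natCard_equiv_fin {Q : Type} [Finite Q] {k : ℕ} (h : Nat.card Q = k) :
    Nat.card (Q ≃ Fin k) = k.factorial := by
  letI : Fintype Q := Fintype.ofFinite _
  rw [Nat.card_eq_fintype_card] at h
  rw [natCard_equiv]
  simp [h]

lemma PRel_congr (e : β ≃ γ) (π : Fin ℓ → Equiv.Perm β) (x y : β) :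
    PRel π x y ↔ PRel (fun j => e.permCongr (π j)) (e x) (e y) := by
  constructor
  · rintro ⟨g, hg, hge⟩
    have hu : ∀ (j : Fin ℓ) (z : β), e (π j z) = (fun j => e.permCongr (π j)) j (e z) := by
      intro j z; simp [Equiv.permCongr_apply]
    obtain ⟨g', hg', hg'e⟩ := sim hu hg y x hge
    exact ⟨g', hg', hg'e⟩
  · rintro ⟨g, hg, hge⟩
    have hu : ∀ (j : Fin ℓ) (z : γ),
        e.symm ((fun j => e.permCongr (π j)) j z) = π j (e.symm z) := by
      intro j z; simp [Equiv.permCongr_apply]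
    obtain ⟨g', hg', hg'e⟩ := sim hu hg (e y) (e x) hge
    exact ⟨g', hg', by simpa using hg'e⟩

lemma QT_card_congr (e : β ≃ γ) (π : Fin ℓ → Equiv.Perm β) :
    Nat.card (QT fun j => e.permCongr (π j)) = Nat.card (QT π) :=
  Nat.card_congr (Quotient.congr e fun x y => by
    rw [orbitRel_iff_Rel, orbitRel_iff_Rel]; exact PRel_congr e π x y).symm

lemma permCongr_comm (e : β ≃ γ) {p q : Equiv.Perm β} (h : p * q = q * p) :
    e.permCongr p * e.permCongr q = e.permCongr q * e.permCongr p := by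
  ext x
  have := Equiv.ext_iff.mp h (e.symm x)
  simp only [Equiv.Perm.mul_apply, Equiv.permCongr_apply, Equiv.symm_apply_apply] at *
  rw [this]

/-- transport of `CT` along an equivalence. -/
noncomputable def CTcongr (e : β ≃ γ) (m : ℕ) : CT ℓ β m ≃ CT ℓ γ m where
  toFun s := ⟨fun j => e.permCongr (s.1 j),
    fun a b => permCongr_comm e (s.2.1 a b),
    (QT_card_congr e s.1).trans s.2.2⟩
  invFun s := ⟨fun j => e.symm.permCongr (s.1 j),
    fun a b => permCongr_comm e.symm (s.2.1 a b),
    (QT_card_congr e.symm s.1).trans s.2.2⟩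
  left_inv s := by
    apply Subtype.ext
    funext j
    ext x
    simp [Equiv.permCongr_apply]
  right_inv s := by
    apply Subtype.ext
    funext j
    ext x
    simp [Equiv.permCongr_apply]

lemma CT_card_fin (m : ℕ) [Fintype β] :
    Nat.card (CT ℓ β m) = Nat.card (CT ℓ (Fin (Fintype.card β)) m) :=
  Nat.card_congr (CTcongr (Fintype.equivFin β) m)

end Counting
section Label

open scoped Classical

variable {ℓ k : ℕ} {α : Type}

/-- valid labellings of orbits. -/
def VL (k : ℕ) (π : Fin ℓ → Equiv.Perm α) : Type :=
  {v : α → Fin k // (∀ x y : α, v x = v y ↔ PRel π x y) ∧ Function.Surjective v}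

noncomputable def labelEquiv (π : Fin ℓ → Equiv.Perm α) :
    VL k π ≃ (QT π ≃ Fin k) where
  toFun v := Equiv.ofBijective
    (fun q => Quotient.liftOn' q v.1 (fun x y hxy =>
      (v.2.1 x y).mpr ((orbitRel_iff_Rel π x y).mp hxy)))
    (by
      constructor
      · intro q q'
        induction q using Quotient.inductionOn' with
        | h x =>
        induction q' using Quotient.inductionOn' with
        | h y =>
          intro hxy
          exact rel_mk ((v.2.1 x y).mp hxy)
      · intro i
        obtain ⟨x, hx⟩ := v.2.2 i
        exact ⟨Quotient.mk'' x, hx⟩)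
  invFun e := ⟨fun x => e (Quotient.mk'' x),
    ⟨fun x y => by
      rw [e.injective.eq_iff]
      constructor
      · intro h
        exact rel_of_mk h
      · intro h
        exact rel_mk h,
     fun i => ⟨Quotient.out (e.symm i), by
      have h1 : Quotient.mk'' (Quotient.out (e.symm i)) = e.symm i := Quotient.out_eq' _
      show e (Quotient.mk'' (Quotient.out (e.symm i))) = i
      rw [h1, Equiv.apply_symm_apply]⟩⟩⟩
  left_inv v := by
    apply Subtype.ext
    funext x
    rfl
  right_inv e := by
    ext q
    induction q using Quotient.inductionOn' with
    | h x => rfl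

instance CT.finite {β : Type} [Finite β] {m : ℕ} : Finite (CT ℓ β m) :=
  Subtype.finite

instance VL.finite [Finite α] {π : Fin ℓ → Equiv.Perm α} : Finite (VL k π) :=
  Subtype.finite

instance YT.finite [Finite α] : Finite (YT ℓ k α) := by
  unfold YT
  infer_instance

/-- split `XT` into a tuple with `k` orbits plus a labelling. -/
noncomputable def xtEquivSigma : XT ℓ k α ≃ Σ s : CT ℓ α k, VL k s.1 where
  toFun p := ⟨⟨p.1.1, p.2.1, by
      have e := labelEquiv (k := k) p.1.1 ⟨p.1.2, p.2.2⟩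
      rw [Nat.card_congr e, Nat.card_eq_fintype_card, Fintype.card_fin]⟩,
    ⟨p.1.2, p.2.2⟩⟩
  invFun s := ⟨(s.1.1, s.2.1), s.1.2.1, s.2.2⟩
  left_inv p := rfl
  right_inv s := rfl

lemma card_XT [Fintype α] : Nat.card (XT ℓ k α) = Nat.card (CT ℓ α k) * k.factorial := by
  rw [Nat.card_congr (xtEquivSigma (ℓ := ℓ) (k := k) (α := α))]
  letI : Fintype (CT ℓ α k) := Fintype.ofFinite _
  rw [natCard_sigma]
  have : ∀ s : CT ℓ α k, Nat.card (VL k s.1) = k.factorial := by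
    intro s
    rw [Nat.card_congr (labelEquiv s.1)]
    exact natCard_equiv_fin s.2.2
  rw [Finset.sum_congr rfl (fun s _ => this s), Finset.sum_const, Finset.card_univ,
    smul_eq_mul, Nat.card_eq_fintype_card]

lemma card_YT [Fintype α] :
    Nat.card (YT ℓ k α) =
      ∑ f : α → Fin k, ∏ i : Fin k, A ℓ (Nat.card {x // f x = i}) 1 := by
  rw [show YT ℓ k α = Σ f : α → Fin k, ∀ i : Fin k, CT ℓ {x // f x = i} 1 from rfl]
  rw [natCard_sigma]
  apply Finset.sum_congr rfl
  intro f _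
  rw [Nat.card_pi]
  apply Finset.prod_congr rfl
  intro i _
  rw [CT_card_fin, A_eq_card]
  have h2 : Nat.card {x : α // f x = i} = Fintype.card {x // f x = i} :=
    Nat.card_eq_fintype_card
  rw [h2]

/-- The key counting identity. -/
lemma key_count (ℓ n k : ℕ) :
    Nat.card (CT ℓ (Fin n) k) * k.factorial =
      ∑ f : Fin n → Fin k, ∏ i : Fin k, A ℓ (Nat.card {x // f x = i}) 1 := by
  rw [← card_XT, Nat.card_congr (mainEquiv (ℓ := ℓ) (k := k) (α := Fin n)), card_YT]
  congr!

end Label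
section Multinomial

open scoped Classical

/-- fiber of a sigma type over a point of the base. -/
def sigmaFst {ι : Type} {F : ι → Type} (i : ι) : {p : Σ j, F j // p.1 = i} ≃ F i where
  toFun q := q.2 ▸ q.1.2
  invFun y := ⟨⟨i, y⟩, rfl⟩
  left_inv := by rintro ⟨⟨j, y⟩, h⟩; subst h; rfl
  right_inv y := rfl

/-- decompose an equivalence into fibers. -/
def VEquiv (n k : ℕ) (F : Fin k → Type) :
    (Σ f : Fin n → Fin k, ∀ i, ({x // f x = i} ≃ F i)) ≃ (Fin n ≃ Σ i, F i) where
  toFun p := (Equiv.sigmaFiberEquiv p.1).symm.trans (Equiv.sigmaCongrRight p.2)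
  invFun E := ⟨fun x => (E x).1,
    fun i => (Equiv.subtypeEquiv E (fun x => Iff.rfl)).trans (sigmaFst i)⟩
  left_inv := by
    rintro ⟨f, e⟩
    show (⟨f, _⟩ : Σ f : Fin n → Fin k, ∀ i, ({x // f x = i} ≃ F i)) = ⟨f, e⟩
    congr 1
    funext i
    ext y
    obtain ⟨x, hx⟩ := y
    subst hx
    rfl
  right_inv E := Equiv.ext fun x => rfl

lemma natCard_equiv_fin' {β : Type} [Fintype β] (m : ℕ) :
    Nat.card (β ≃ Fin m) = if Nat.card β = m then m.factorial else 0 := by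
  rw [natCard_equiv, Fintype.card_fin, Nat.card_eq_fintype_card]
  split_ifs with h
  · rw [h]
  · rfl

lemma multinomial_count (n k : ℕ) (l : Fin k → ℕ) (hl : ∑ i, l i = n) :
    Nat.card {f : Fin n → Fin k // ∀ i, Nat.card {x // f x = i} = l i} *
      ∏ i, (l i).factorial = n.factorial := by
  have hV := Nat.card_congr (VEquiv n k (fun i => Fin (l i)))
  -- RHS: number of equivalences
  have hR : Nat.card (Fin n ≃ Σ i, Fin (l i)) = n.factorial := by
    rw [natCard_equiv]
    have hc : Fintype.card (Σ i, Fin (l i)) = n := by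
      simp [Fintype.card_sigma, hl]
    rw [hc, Fintype.card_fin]
    simp
  -- LHS: sum over functions
  have hL : Nat.card (Σ f : Fin n → Fin k, ∀ i, ({x // f x = i} ≃ Fin (l i))) =
      Nat.card {f : Fin n → Fin k // ∀ i, Nat.card {x // f x = i} = l i} *
        ∏ i, (l i).factorial := by
    rw [natCard_sigma]
    have step : ∀ f : Fin n → Fin k,
        Nat.card (∀ i, ({x // f x = i} ≃ Fin (l i))) =
          if (∀ i, Nat.card {x // f x = i} = l i) then ∏ i, (l i).factorial else 0 := by
      intro f
      rw [Nat.card_pi]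
      by_cases hall : ∀ i, Nat.card {x // f x = i} = l i
      · rw [if_pos hall]
        apply Finset.prod_congr rfl
        intro i _
        rw [natCard_equiv_fin', if_pos (hall i)]
      · rw [if_neg hall]
        push_neg at hall
        obtain ⟨i, hi⟩ := hall
        apply Finset.prod_eq_zero (Finset.mem_univ i)
        rw [natCard_equiv_fin', if_neg hi]
    rw [Finset.sum_congr rfl (fun f _ => step f), ← Finset.sum_filter,
      Finset.sum_const, smul_eq_mul]
    congr 1
    rw [Nat.card_eq_fintype_card, Fintype.card_subtype]
  rw [← hL, hV, hR]

end Multinomial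
section Final

open scoped Classical

lemma A_zero (ℓ : ℕ) : A ℓ 0 1 = 0 := by
  rw [A_eq_card]
  have hQ : ∀ π : Fin ℓ → Equiv.Perm (Fin 0), IsEmpty (QT π) := by
    intro π
    constructor
    intro q
    obtain ⟨x, -⟩ := Quotient.exists_rep q
    exact x.elim0
  haveI : IsEmpty (CT ℓ (Fin 0) 1) := by
    constructor
    rintro ⟨π, -, hcard⟩
    haveI := hQ π
    rw [Nat.card_of_isEmpty] at hcard
    exact absurd hcard (by norm_num)
  exact Nat.card_of_isEmpty

/-- the bridge between the fiberwise sum and the antidiagonal sum. -/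
lemma bridge (ℓ n k : ℕ) :
    (∑ f : Fin n → Fin k, ∏ i : Fin k, (A ℓ (Nat.card {x // f x = i}) 1 : ℚ)) =
      (n.factorial : ℚ) * ∑ l ∈ Finset.finsuppAntidiag (Finset.range k) n,
        ∏ m ∈ Finset.range k, (A ℓ (l m) 1 : ℚ) / ((l m).factorial : ℚ) := by
  -- the size-vector map
  set S : (Fin n → Fin k) → (ℕ →₀ ℕ) := fun f =>
    Finsupp.onFinset (Finset.range k) (fun m => Nat.card {x : Fin n // (f x : ℕ) = m})
      (fun m hm => by
        by_contra h
        haveI : IsEmpty {x : Fin n // (f x : ℕ) = m} :=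
          ⟨fun x => h (x.2 ▸ Finset.mem_range.mpr (f x.1).isLt)⟩
        exact hm Nat.card_of_isEmpty) with hS
  have hfibercard : ∀ (f : Fin n → Fin k) (i : Fin k),
      Nat.card {x : Fin n // (f x : ℕ) = (i : ℕ)} = Nat.card {x : Fin n // f x = i} := by
    intro f i
    exact Nat.card_congr (Equiv.subtypeEquivRight fun x => Fin.val_eq_val _ _)
  have hmaps : ∀ f : Fin n → Fin k, S f ∈ Finset.finsuppAntidiag (Finset.range k) n := by
    intro f
    rw [Finset.mem_finsuppAntidiag]
    constructor
    · have h1 : (Finset.univ : Finset (Fin n)).card =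
          ∑ m ∈ Finset.range k, (Finset.univ.filter fun x : Fin n => (f x : ℕ) = m).card :=
        Finset.card_eq_sum_card_fiberwise (fun x _ => Finset.mem_range.mpr (f x).isLt)
      have h2 : ∀ m, Nat.card {x : Fin n // (f x : ℕ) = m} =
          (Finset.univ.filter fun x : Fin n => (f x : ℕ) = m).card := by
        intro m
        rw [Nat.card_eq_fintype_card, Fintype.card_subtype]
      calc ∑ m ∈ Finset.range k, S f m
          = ∑ m ∈ Finset.range k,
              (Finset.univ.filter fun x : Fin n => (f x : ℕ) = m).card := by
            apply Finset.sum_congr rfl; intro m _; exact h2 m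
        _ = (Finset.univ : Finset (Fin n)).card := h1.symm
        _ = n := by simp
    · exact Finsupp.support_onFinset_subset
  have hfib := Finset.sum_fiberwise_of_maps_to (s := Finset.univ)
    (t := Finset.finsuppAntidiag (Finset.range k) n) (g := S)
    (fun f _ => hmaps f)
    (fun f => ∏ i : Fin k, (A ℓ (Nat.card {x // f x = i}) 1 : ℚ))
  rw [← hfib, Finset.mul_sum]
  apply Finset.sum_congr rfl
  intro l hl
  obtain ⟨hlsum, hlsupp⟩ := Finset.mem_finsuppAntidiag.mp hl
  -- identify the filter with the subtype predicate
  have hSP : ∀ f : Fin n → Fin k,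
      S f = l ↔ ∀ i : Fin k, Nat.card {x : Fin n // f x = i} = l (i : ℕ) := by
    intro f
    constructor
    · intro h i
      rw [← hfibercard f i]
      have := congrFun (congrArg (fun v : ℕ →₀ ℕ => (v : ℕ → ℕ)) h) (i : ℕ)
      simpa [hS] using this
    · intro h
      ext m
      by_cases hm : m < k
      · have : S f m = Nat.card {x : Fin n // (f x : ℕ) = m} := rfl
        rw [this]
        have h3 := h ⟨m, hm⟩
        rw [← hfibercard f ⟨m, hm⟩] at h3
        simpa using h3
      · have h4 : S f m = 0 := by
          haveI : IsEmpty {x : Fin n // (f x : ℕ) = m} :=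
            ⟨fun x => hm (x.2 ▸ (f x.1).isLt)⟩
          simpa [hS] using Nat.card_of_isEmpty
        rw [h4]
        exact (Finsupp.notMem_support_iff.mp
          (fun hc => hm (Finset.mem_range.mp (hlsupp hc)))).symm
  -- the inner sum is constant on the fiber
  have hinner : ∀ f ∈ Finset.univ.filter (fun f : Fin n → Fin k => S f = l),
      ∏ i : Fin k, (A ℓ (Nat.card {x // f x = i}) 1 : ℚ) =
        ∏ m ∈ Finset.range k, (A ℓ (l m) 1 : ℚ) := by
    intro f hf
    have hSf := (Finset.mem_filter.mp hf).2
    have h5 : ∀ i : Fin k, Nat.card {x : Fin n // f x = i} = l (i : ℕ) := (hSP f).mp hSf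
    rw [show (∏ i : Fin k, (A ℓ (Nat.card {x // f x = i}) 1 : ℚ)) =
        ∏ i : Fin k, (A ℓ (l (i : ℕ)) 1 : ℚ) from
      Finset.prod_congr rfl (fun i _ => by rw [h5 i])]
    exact Fin.prod_univ_eq_prod_range (fun m => (A ℓ (l m) 1 : ℚ)) k
  rw [Finset.sum_congr rfl hinner, Finset.sum_const, nsmul_eq_mul]
  -- now use the multinomial count
  have hsum' : ∑ i : Fin k, l (i : ℕ) = n := by
    rw [Fin.sum_univ_eq_sum_range (fun m => l m) k]
    exact hlsum
  have hmc := multinomial_count n k (fun i => l (i : ℕ)) hsum'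
  have hcount : (Finset.univ.filter (fun f : Fin n → Fin k => S f = l)).card =
      Nat.card {f : Fin n → Fin k // ∀ i : Fin k, Nat.card {x // f x = i} = l (i : ℕ)} := by
    rw [Nat.card_eq_fintype_card, Fintype.card_subtype]
    congr 1
    apply Finset.filter_congr
    intro f _
    exact hSP f
  have hprodfact : (∏ i : Fin k, ((l (i : ℕ)).factorial)) =
      ∏ m ∈ Finset.range k, (l m).factorial :=
    Fin.prod_univ_eq_prod_range (fun m => (l m).factorial) k
  rw [hprodfact] at hmc
  rw [hcount]
  -- cast to ℚ and finish
  have hcast : (Nat.card {f : Fin n → Fin k //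
        ∀ i : Fin k, Nat.card {x // f x = i} = l (i : ℕ)} : ℚ) *
      (∏ m ∈ Finset.range k, ((l m).factorial : ℚ)) = (n.factorial : ℚ) := by
    push_cast [← hmc]
    ring
  have hne : (∏ m ∈ Finset.range k, ((l m).factorial : ℚ)) ≠ 0 :=
    Finset.prod_ne_zero_iff.mpr fun m _ =>
      Nat.cast_ne_zero.mpr (Nat.factorial_ne_zero _)
  rw [Finset.prod_div_distrib, ← hcast]
  field_simp

end Final
/-- A(ℓ,n,k)/n! = [z^n] (1/k!) L(z)^k. -/
theorem stmt_19 (ℓ n k : ℕ) (hℓ : 2 ≤ ℓ) (hn : 1 ≤ n) (hk : 1 ≤ k) :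
    (A ℓ n k : ℚ) / (n.factorial : ℚ) =
      PowerSeries.coeff n (((k.factorial : ℚ))⁻¹ • (L ℓ) ^ k) := by
  classical
  have hcoeffL : ∀ m : ℕ, PowerSeries.coeff m (L ℓ) = (A ℓ m 1 : ℚ) / m.factorial := by
    intro m
    rw [L, PowerSeries.coeff_mk]
    split_ifs with h
    · subst h; rw [A_zero]; simp
    · rfl
  rw [map_smul, smul_eq_mul, PowerSeries.coeff_pow]
  have hterm : ∀ l ∈ Finset.finsuppAntidiag (Finset.range k) n,
      (∏ i ∈ Finset.range k, PowerSeries.coeff (l i) (L ℓ)) =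
        ∏ i ∈ Finset.range k, (A ℓ (l i) 1 : ℚ) / ((l i).factorial : ℚ) :=
    fun l _ => Finset.prod_congr rfl fun i _ => hcoeffL (l i)
  rw [Finset.sum_congr rfl hterm]
  have hkcq : (A ℓ n k : ℚ) * (k.factorial : ℚ) =
      ∑ f : Fin n → Fin k, ∏ i : Fin k, (A ℓ (Nat.card {x // f x = i}) 1 : ℚ) := by
    have h := congrArg (fun x : ℕ => (x : ℚ)) (key_count ℓ n k)
    push_cast at h
    rw [A_eq_card]
    exact h
  have hmain : (A ℓ n k : ℚ) * (k.factorial : ℚ) =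
      (n.factorial : ℚ) * ∑ l ∈ Finset.finsuppAntidiag (Finset.range k) n,
        ∏ m ∈ Finset.range k, (A ℓ (l m) 1 : ℚ) / ((l m).factorial : ℚ) :=
    hkcq.trans (bridge ℓ n k)
  have hn0 : (n.factorial : ℚ) ≠ 0 := Nat.cast_ne_zero.mpr (Nat.factorial_ne_zero n)
  have hk0 : (k.factorial : ℚ) ≠ 0 := Nat.cast_ne_zero.mpr (Nat.factorial_ne_zero k)
  rw [eq_inv_mul_iff_mul_eq₀ hk0, mul_div_assoc', div_eq_iff hn0]
  linear_combination hmain
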